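/- Let F be a finite field, let C ⊆ (Fin ℓ → F) be a linear code containing a nonzero vector, let Δ be its minimum distance, and let s ∈ (Fin ℓ → F) and r ∈ ℕ satisfy r < Δ and hammingDist(s, c) ≥ r for every c ∈ C. Let B = {s + c : c ∈ C}. Then: (i) any two distinct vectors both in C, or both in B, are at Hamming distance at least Δ, which is greater than r; (ii) every pair (a, b) ∈ C × B has hammingDist(a, b) ≥ r; and (iii) the number of pairs (a, b) ∈ C × B with hammingDist(a, b) = r equals |C| multiplied by the number of codewords c ∈ C with hammingDist(s, c) = r. -/

import Mathlib

/-- The minimum distance of a linear code `C`: the least Hamming weight of a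
nonzero codeword of `C`. -/
noncomputable def minDist {ℓ : ℕ} {F : Type*} [Field F] [Fintype F] [DecidableEq F]
    (C : Submodule F (Fin ℓ → F)) : ℕ :=
  sInf {w : ℕ | ∃ c ∈ C, c ≠ 0 ∧ hammingNorm c = w}

theorem hammingDist_eq_hammingNorm_sub {ℓ : ℕ} {F : Type*} [Field F] [DecidableEq F]
    (x y : Fin ℓ → F) : hammingDist x y = hammingNorm (x - y) := by
  simp_rw [hammingNorm, hammingDist, Pi.sub_apply, ne_eq, sub_eq_zero]

/-- the general construction of a dense bipartite graph from a linear
code `C` together with a center `s` at distance `≥ r` from every codeword, where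
`r < Δ(C)`: the parts are `C` and the coset `B = s + C`; distinct same-side vectors
are at distance `≥ Δ(C) > r`, all cross pairs are at distance `≥ r`, and the number
of cross pairs at distance exactly `r` is `|C|` times the number of codewords at
distance exactly `r` from `s`. -/
theorem stmt_16 {ℓ : ℕ} {F : Type*} [Field F] [Fintype F] [DecidableEq F]
    (C : Submodule F (Fin ℓ → F)) (hC : ∃ c ∈ C, c ≠ 0)
    (s : Fin ℓ → F) (r : ℕ) (hr : r < minDist C)
    (hsep : ∀ c ∈ C, r ≤ hammingDist s c) :
    (∀ a ∈ C, ∀ a' ∈ C, a ≠ a' → minDist C ≤ hammingDist a a') ∧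
    (∀ b ∈ (fun c => s + c) '' (C : Set (Fin ℓ → F)),
      ∀ b' ∈ (fun c => s + c) '' (C : Set (Fin ℓ → F)), b ≠ b' →
        minDist C ≤ hammingDist b b') ∧
    (∀ a ∈ C, ∀ b ∈ (fun c => s + c) '' (C : Set (Fin ℓ → F)),
        r ≤ hammingDist a b) ∧
    {ab : (Fin ℓ → F) × (Fin ℓ → F) |
        ab.1 ∈ C ∧ ab.2 ∈ (fun c => s + c) '' (C : Set (Fin ℓ → F)) ∧
        hammingDist ab.1 ab.2 = r}.ncard
      = Nat.card C * {c : Fin ℓ → F | c ∈ C ∧ hammingDist s c = r}.ncard := by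
  have hΔ : ∀ d ∈ C, d ≠ 0 → minDist C ≤ hammingNorm d := fun d hd hne =>
    Nat.sInf_le ⟨d, hd, hne, rfl⟩
  have hnn : ∀ x y : Fin ℓ → F, hammingNorm (x - y) = hammingDist x y := fun x y =>
    (hammingDist_eq_hammingNorm_sub x y).symm
  refine ⟨?_, ?_, ?_, ?_⟩
  · intro a ha a' ha' hne
    rw [hammingDist_eq_hammingNorm_sub]
    exact hΔ _ (C.sub_mem ha ha') (sub_ne_zero.mpr hne)
  · rintro b ⟨c, hc, rfl⟩ b' ⟨c', hc', rfl⟩ hne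
    rw [hammingDist_eq_hammingNorm_sub]
    have h0 : s + c - (s + c') = c - c' := by ring
    rw [h0]
    refine hΔ _ (C.sub_mem hc hc') fun h => hne ?_
    rw [sub_eq_zero] at h
    rw [h]
  · rintro a ha b ⟨c, hc, rfl⟩
    calc r ≤ hammingDist s (a - c) := hsep _ (C.sub_mem ha hc)
      _ = hammingDist (a - c) s := hammingDist_comm _ _
      _ = hammingNorm (a - c - s) := hammingDist_eq_hammingNorm_sub _ _
      _ = hammingNorm (a - (s + c)) := by rw [show a - c - s = a - (s + c) by ring]
      _ = hammingDist a (s + c) := hnn _ _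
  · set T : Set (Fin ℓ → F) := {c : Fin ℓ → F | c ∈ C ∧ hammingDist s c = r} with hT
    have hinj : Function.Injective
        (fun p : (Fin ℓ → F) × (Fin ℓ → F) => (p.1, s + p.1 - p.2)) := by
      rintro ⟨a, c⟩ ⟨a', c'⟩ h
      simp only [Prod.mk.injEq] at h
      obtain ⟨h1, h2⟩ := h
      subst h1
      exact Prod.ext rfl (by linear_combination -h2)
    have hset : {ab : (Fin ℓ → F) × (Fin ℓ → F) |
        ab.1 ∈ C ∧ ab.2 ∈ (fun c => s + c) '' (C : Set (Fin ℓ → F)) ∧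
        hammingDist ab.1 ab.2 = r}
        = (fun p : (Fin ℓ → F) × (Fin ℓ → F) => (p.1, s + p.1 - p.2)) ''
          ((C : Set (Fin ℓ → F)) ×ˢ T) := by
      ext ⟨a, b⟩
      simp only [Set.mem_setOf_eq, Set.mem_image, Set.mem_prod, Prod.exists, Prod.mk.injEq, hT]
      constructor
      · rintro ⟨ha, ⟨c, hc, rfl⟩, hd⟩
        refine ⟨a, a - c, ⟨ha, C.sub_mem ha hc, ?_⟩, rfl, by ring⟩
        calc hammingDist s (a - c) = hammingDist (a - c) s := hammingDist_comm _ _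
          _ = hammingNorm (a - c - s) := hammingDist_eq_hammingNorm_sub _ _
          _ = hammingNorm (a - (s + c)) := by rw [show a - c - s = a - (s + c) by ring]
          _ = hammingDist a (s + c) := hnn _ _
          _ = r := hd
      · rintro ⟨a', c, ⟨ha', hc, hd⟩, rfl, rfl⟩
        refine ⟨ha', ⟨a' - c, C.sub_mem ha' hc, by ring⟩, ?_⟩
        calc hammingDist a' (s + a' - c) = hammingNorm (a' - (s + a' - c)) :=
              hammingDist_eq_hammingNorm_sub _ _
          _ = hammingNorm (c - s) := by rw [show a' - (s + a' - c) = c - s by ring]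
          _ = hammingDist c s := hnn _ _
          _ = hammingDist s c := hammingDist_comm _ _
          _ = r := hd
    rw [hset, Set.ncard_image_of_injective _ hinj,
      ← Nat.card_coe_set_eq, Nat.card_congr (Equiv.Set.prod _ _), Nat.card_prod,
      Nat.card_coe_set_eq]
    rfl
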